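/- Let F₁, F₂ be c.d.f.'s on [0,1] of continuous positive densities, and suppose there is a unique x* ∈ (0,1) with F₁(x*) = F₂(x*), F₁(x) > F₂(x) for 0 < x < x*, and F₁(x) < F₂(x) for x* < x < 1 (i.e., F₂ is more bunched around x* than F₁). If X₁ ∼ F₁ and X₂ ∼ F₂ have equal means, then E[φ(X₂)] ≥ E[φ(X₁)] for every increasing concave function φ : ℝ → ℝ. -/

import Mathlib

open MeasureTheory

open Set
open scoped ENNReal

section Helpers

private lemma lc_aux {Ω : Type*} [MeasurableSpace Ω] (μ : Measure Ω) [IsProbabilityMeasure μ]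
    (X : Ω → ℝ) (hX : Measurable X) (hsupp : ∀ᵐ ω ∂μ, X ω ∈ Set.Icc (0:ℝ) 1)
    (ρ : Measure ℝ) [SigmaFinite ρ] :
    ∫⁻ ω, ρ (Set.Ioo 0 (X ω)) ∂μ = ∫⁻ x in Set.Ioc (0:ℝ) 1, μ {ω | x < X ω} ∂ρ := by
  set s : Set (Ω × ℝ) := {p | 0 < p.2 ∧ p.2 < X p.1} with hs_def
  have hs : MeasurableSet s := by
    have h1 : MeasurableSet {p : Ω × ℝ | 0 < p.2} := measurable_snd measurableSet_Ioi
    have h2 : MeasurableSet {p : Ω × ℝ | p.2 < X p.1} :=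
      measurableSet_lt measurable_snd (hX.comp measurable_fst)
    exact h1.inter h2
  have key : ∫⁻ ω, ρ (Set.Ioo 0 (X ω)) ∂μ = ∫⁻ x in Set.Ioi (0:ℝ), μ {ω | x < X ω} ∂ρ := by
    calc ∫⁻ ω, ρ (Set.Ioo 0 (X ω)) ∂μ
        = ∫⁻ ω, ρ (Prod.mk ω ⁻¹' s) ∂μ := by
          rfl
      _ = (μ.prod ρ) s := (Measure.prod_apply hs).symm
      _ = ∫⁻ x, μ ((fun ω => (ω, x)) ⁻¹' s) ∂ρ := Measure.prod_apply_symm hs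
      _ = ∫⁻ x, (Set.Ioi (0:ℝ)).indicator (fun x => μ {ω | x < X ω}) x ∂ρ := by
          refine lintegral_congr fun x => ?_
          by_cases hx : 0 < x
          · rw [Set.indicator_of_mem (Set.mem_Ioi.mpr hx)]
            congr 1
            ext ω
            simp [hs_def, hx]
          · rw [Set.indicator_of_notMem (fun h => hx (Set.mem_Ioi.mp h))]
            convert measure_empty
            · ext ω
              simp [hs_def]
              intro h
              exact absurd h hx
            · infer_instance
      _ = ∫⁻ x in Set.Ioi (0:ℝ), μ {ω | x < X ω} ∂ρ := by
          rw [lintegral_indicator measurableSet_Ioi]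
  rw [key, ← Set.Ioc_union_Ioi_eq_Ioi (zero_le_one (α := ℝ)),
    lintegral_union measurableSet_Ioi (Set.Ioc_disjoint_Ioi le_rfl)]
  have h0 : ∫⁻ x in Set.Ioi (1:ℝ), μ {ω | x < X ω} ∂ρ
      = ∫⁻ x in Set.Ioi (1:ℝ), (0:ℝ≥0∞) ∂ρ := by
    refine setLIntegral_congr_fun_ae measurableSet_Ioi (Filter.Eventually.of_forall fun x hx => ?_)
    refine measure_mono_null (fun ω hω => ?_) ((ae_iff.1 hsupp))
    exact fun h => absurd (le_trans hω.le h.2) (not_le.2 hx)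
  rw [h0]
  simp

private lemma slope4 {φ : ℝ → ℝ} (hconc : ConcaveOn ℝ Set.univ φ) {a b c d : ℝ}
    (hab : a < b) (hbc : b ≤ c) (hcd : c < d) :
    (φ d - φ c) / (d - c) ≤ (φ b - φ a) / (b - a) := by
  rcases eq_or_lt_of_le hbc with rfl | hbc'
  · exact hconc.slope_anti_adjacent (Set.mem_univ a) (Set.mem_univ d) hab hcd
  · calc (φ d - φ c) / (d - c) ≤ (φ c - φ b) / (c - b) :=
        hconc.slope_anti_adjacent (Set.mem_univ b) (Set.mem_univ d) hbc' hcd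
    _ ≤ (φ b - φ a) / (b - a) :=
        hconc.slope_anti_adjacent (Set.mem_univ a) (Set.mem_univ c) hab hbc'

private lemma exists_K {φ : ℝ → ℝ} (hmono : Monotone φ) (hconc : ConcaveOn ℝ Set.univ φ)
    (xstar : ℝ) :
    ∃ K : ℝ, 0 ≤ K ∧ (∀ a b, a ≤ b → b ≤ xstar → K * (b - a) ≤ φ b - φ a) ∧
      (∀ a b, xstar ≤ a → a ≤ b → φ b - φ a ≤ K * (b - a)) := by
  set S : Set ℝ := (fun y => (φ y - φ xstar) / (y - xstar)) '' Set.Ioi xstar with hS_def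
  have hmem : ∀ y, xstar < y → (φ y - φ xstar) / (y - xstar) ∈ S :=
    fun y hy => ⟨y, hy, rfl⟩
  have hSne : S.Nonempty := ⟨_, hmem (xstar + 1) (by linarith)⟩
  have hub : ∀ a b, a < b → b ≤ xstar → (φ b - φ a) / (b - a) ∈ upperBounds S := by
    rintro a b hab hbx _ ⟨y, hy, rfl⟩
    exact slope4 hconc hab hbx hy
  have hbdd : BddAbove S := ⟨_, hub (xstar - 1) xstar (by linarith) le_rfl⟩
  set K := sSup S with hK_def
  have hK0 : 0 ≤ K := by
    have h1 : (φ (xstar + 1) - φ xstar) / (xstar + 1 - xstar) ≤ K :=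
      le_csSup hbdd (hmem _ (by linarith))
    have h2 : (0:ℝ) ≤ (φ (xstar + 1) - φ xstar) / (xstar + 1 - xstar) := by
      apply div_nonneg
      · linarith [hmono (by linarith : xstar ≤ xstar + 1)]
      · linarith
    linarith
  refine ⟨K, hK0, ?_, ?_⟩
  · intro a b hab hbx
    rcases eq_or_lt_of_le hab with rfl | hab'
    · simp
    · have h1 : K ≤ (φ b - φ a) / (b - a) := csSup_le hSne (hub a b hab' hbx)
      rw [← le_div_iff₀ (by linarith : (0:ℝ) < b - a)]
      exact h1
  · intro a b hax hab
    rcases eq_or_lt_of_le hab with rfl | hab'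
    · simp
    · have h1 : (φ b - φ a) / (b - a) ≤ K := by
        rcases eq_or_lt_of_le hax with rfl | hax'
        · exact le_csSup hbdd (hmem b hab')
        · calc (φ b - φ a) / (b - a) ≤ (φ a - φ xstar) / (a - xstar) :=
              slope4 hconc hax' le_rfl hab'
          _ ≤ K := le_csSup hbdd (hmem a hax')
      rw [← div_le_iff₀ (by linarith : (0:ℝ) < b - a)]
      exact h1

private noncomputable def clampf (c d : ℝ) (x : ℝ) : ℝ := min (max x c) d

private lemma clampf_mono {c d : ℝ} : Monotone (clampf c d) :=
  fun _ _ h => min_le_min (max_le_max h le_rfl) le_rfl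

private lemma clampf_cont {c d : ℝ} : Continuous (clampf c d) :=
  (continuous_id.max continuous_const).min continuous_const

private lemma clampf_mem {c d : ℝ} (hcd : c ≤ d) (x : ℝ) :
    c ≤ clampf c d x ∧ clampf c d x ≤ d :=
  ⟨le_min (le_max_right x c) hcd, min_le_right _ _⟩

private lemma clampf_eq {c d x : ℝ} (h1 : c ≤ x) (h2 : x ≤ d) : clampf c d x = x := by
  rw [clampf, max_eq_left h1, min_eq_left h2]

/-- Stieltjes function built from a right-continuous composition with clamp. -/
private noncomputable def stClamp (g : ℝ → ℝ) (c d : ℝ)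
    (hmono : Monotone fun x => g (clampf c d x))
    (hrc : ∀ y, ContinuousWithinAt g (Ici y) y) : StieltjesFunction ℝ where
  toFun := fun x => g (clampf c d x)
  mono' := hmono
  right_continuous' := fun x => by
    refine ContinuousWithinAt.comp (hrc (clampf c d x)) clampf_cont.continuousWithinAt ?_
    exact fun y hy => clampf_mono hy

private lemma measure_restrict_ge (f : StieltjesFunction ℝ) {K c d : ℝ} (hK0 : 0 ≤ K) (hcd : c ≤ d)
    (k1 : ∀ a b, c ≤ a → a ≤ b → b ≤ d → K * (b - a) ≤ f b - f a) :
    (ENNReal.ofReal K • volume).restrict (Set.Ioc c d) ≤ f.measure.restrict (Set.Ioc c d) := by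
  have hrc : ∀ y, ContinuousWithinAt (fun x => f x - K * x) (Ici y) y := fun y =>
    (f.right_continuous y).sub ((continuous_const.mul continuous_id).continuousWithinAt)
  have hmono : Monotone fun x => (fun z => f z - K * z) (clampf c d x) := by
    intro x y hxy
    have h1 := clampf_mem hcd x
    have h2 := clampf_mem hcd y
    have h3 : clampf c d x ≤ clampf c d y := clampf_mono hxy
    have := k1 _ _ h1.1 h3 h2.2
    dsimp only
    nlinarith
  set g : StieltjesFunction ℝ := stClamp (fun z => f z - K * z) c d hmono hrc with hg_def
  have hgval : ∀ x, c ≤ x → x ≤ d → g x = f x - K * x := by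
    intro x h1 h2
    show (fun z => f z - K * z) (clampf c d x) = _
    rw [clampf_eq h1 h2]
  have key : f.measure.restrict (Set.Ioc c d)
      = g.measure.restrict (Set.Ioc c d) + (ENNReal.ofReal K • volume).restrict (Set.Ioc c d) := by
    refine Measure.ext_of_Ioc' _ _ (fun a b _ => ?_) (fun a b hab => ?_)
    · rw [Measure.restrict_apply measurableSet_Ioc]
      exact ne_of_lt (lt_of_le_of_lt (measure_mono Set.inter_subset_left) measure_Ioc_lt_top)
    · rw [Measure.restrict_apply measurableSet_Ioc, Measure.add_apply,
        Measure.restrict_apply measurableSet_Ioc, Measure.restrict_apply measurableSet_Ioc,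
        Set.Ioc_inter_Ioc]
      set a' := a ⊔ c
      set b' := b ⊓ d
      by_cases h : a' < b'
      · have hca : c ≤ a' := le_sup_right
        have hbd : b' ≤ d := inf_le_right
        have had : a' ≤ d := le_trans h.le hbd
        have hcb : c ≤ b' := le_trans hca h.le
        rw [f.measure_Ioc, g.measure_Ioc, Measure.smul_apply, Real.volume_Ioc, smul_eq_mul,
          hgval a' hca had, hgval b' hcb hbd, ← ENNReal.ofReal_mul hK0, ← ENNReal.ofReal_add]
        · congr 1
          ring
        · have := k1 a' b' hca h.le hbd
          linarith
        · nlinarith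
      · rw [Set.Ioc_eq_empty h]
        simp
  rw [key]
  exact Measure.le_add_left le_rfl

private lemma measure_restrict_le (f : StieltjesFunction ℝ) {K c d : ℝ} (hK0 : 0 ≤ K) (hcd : c ≤ d)
    (k2 : ∀ a b, c ≤ a → a ≤ b → b ≤ d → f b - f a ≤ K * (b - a)) :
    f.measure.restrict (Set.Ioc c d) ≤ (ENNReal.ofReal K • volume).restrict (Set.Ioc c d) := by
  have hrc : ∀ y, ContinuousWithinAt (fun x => K * x - f x) (Ici y) y := fun y =>
    ((continuous_const.mul continuous_id).continuousWithinAt).sub (f.right_continuous y)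
  have hmono : Monotone fun x => (fun z => K * z - f z) (clampf c d x) := by
    intro x y hxy
    have h1 := clampf_mem hcd x
    have h2 := clampf_mem hcd y
    have h3 : clampf c d x ≤ clampf c d y := clampf_mono hxy
    have := k2 _ _ h1.1 h3 h2.2
    dsimp only
    nlinarith
  set g : StieltjesFunction ℝ := stClamp (fun z => K * z - f z) c d hmono hrc with hg_def
  have hgval : ∀ x, c ≤ x → x ≤ d → g x = K * x - f x := by
    intro x h1 h2
    show (fun z => K * z - f z) (clampf c d x) = _
    rw [clampf_eq h1 h2]
  have key : (ENNReal.ofReal K • volume).restrict (Set.Ioc c d)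
      = g.measure.restrict (Set.Ioc c d) + f.measure.restrict (Set.Ioc c d) := by
    refine Measure.ext_of_Ioc' _ _ (fun a b _ => ?_) (fun a b hab => ?_)
    · rw [Measure.restrict_apply measurableSet_Ioc]
      refine ne_of_lt (lt_of_le_of_lt (measure_mono Set.inter_subset_left) ?_)
      rw [Measure.smul_apply, smul_eq_mul, Real.volume_Ioc]
      exact ENNReal.mul_lt_top ENNReal.ofReal_lt_top ENNReal.ofReal_lt_top
    · rw [Measure.restrict_apply measurableSet_Ioc, Measure.add_apply,
        Measure.restrict_apply measurableSet_Ioc, Measure.restrict_apply measurableSet_Ioc,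
        Set.Ioc_inter_Ioc]
      set a' := a ⊔ c
      set b' := b ⊓ d
      by_cases h : a' < b'
      · have hca : c ≤ a' := le_sup_right
        have hbd : b' ≤ d := inf_le_right
        have had : a' ≤ d := le_trans h.le hbd
        have hcb : c ≤ b' := le_trans hca h.le
        rw [f.measure_Ioc, g.measure_Ioc, Measure.smul_apply, Real.volume_Ioc, smul_eq_mul,
          hgval a' hca had, hgval b' hcb hbd, ← ENNReal.ofReal_mul hK0, ← ENNReal.ofReal_add]
        · congr 1
          ring
        · have := k2 a' b' hca h.le hbd
          linarith
        · have := f.mono h.le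
          linarith
      · rw [Set.Ioc_eq_empty h]
        simp
  rw [key]
  exact Measure.le_add_left le_rfl

end Helpers

/-- If F₂ is more bunched than F₁ around x* and the means are equal, then
E[φ(X₂)] ≥ E[φ(X₁)] for every increasing concave φ. -/
theorem stmt_6 {Ω : Type*} [MeasurableSpace Ω] (μ : Measure Ω) [IsProbabilityMeasure μ]
    (X₁ X₂ : Ω → ℝ) (hX₁ : Measurable X₁) (hX₂ : Measurable X₂)
    (hsupp₁ : ∀ᵐ ω ∂μ, X₁ ω ∈ Set.Icc (0:ℝ) 1)
    (hsupp₂ : ∀ᵐ ω ∂μ, X₂ ω ∈ Set.Icc (0:ℝ) 1)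
    (F₁ F₂ : ℝ → ℝ)
    (hF₁ : ∀ x, F₁ x = (μ {ω | X₁ ω ≤ x}).toReal)
    (hF₂ : ∀ x, F₂ x = (μ {ω | X₂ ω ≤ x}).toReal)
    (xstar : ℝ) (hx : xstar ∈ Set.Ioo (0:ℝ) 1)
    (hcross : F₁ xstar = F₂ xstar)
    (hbelow : ∀ x ∈ Set.Ioo (0:ℝ) xstar, F₁ x > F₂ x)
    (habove : ∀ x ∈ Set.Ioo xstar (1:ℝ), F₁ x < F₂ x)
    (hmean : ∫ ω, X₁ ω ∂μ = ∫ ω, X₂ ω ∂μ) :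
    ∀ φ : ℝ → ℝ, Monotone φ → ConcaveOn ℝ Set.univ φ →
      Integrable (fun ω => φ (X₁ ω)) μ → Integrable (fun ω => φ (X₂ ω)) μ →
      ∫ ω, φ (X₂ ω) ∂μ ≥ ∫ ω, φ (X₁ ω) ∂μ := by
  intro φ hφmono hφconc hint₁ hint₂
  -- continuity of φ
  have hφcont : Continuous φ := by
    rw [← continuousOn_univ]
    exact ConcaveOn.continuousOn isOpen_univ hφconc
  have hφmeas : Measurable φ := hφmono.measurable
  -- the Stieltjes measure of φ
  set Φ : StieltjesFunction ℝ := ⟨φ, hφmono, fun x => hφcont.continuousWithinAt⟩ with hΦ_def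
  have hΦcoe : (Φ : ℝ → ℝ) = φ := rfl
  set ν : Measure ℝ := Φ.measure with hν_def
  have hleftLim : ∀ y : ℝ, Function.leftLim φ y = φ y := fun y =>
    hφmono.continuousWithinAt_Iio_iff_leftLim_eq.1 hφcont.continuousWithinAt
  -- the survival functions
  set f₁ : ℝ → ℝ≥0∞ := fun x => μ {ω | x < X₁ ω} with hf₁_def
  set f₂ : ℝ → ℝ≥0∞ := fun x => μ {ω | x < X₂ ω} with hf₂_def
  have hf₁anti : Antitone f₁ := fun x y hxy =>
    measure_mono (fun ω (hω : y < X₁ ω) => lt_of_le_of_lt hxy hω)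
  have hf₂anti : Antitone f₂ := fun x y hxy =>
    measure_mono (fun ω (hω : y < X₂ ω) => lt_of_le_of_lt hxy hω)
  have hf₁meas : Measurable f₁ := hf₁anti.measurable
  have hf₂meas : Measurable f₂ := hf₂anti.measurable
  -- expectation identity for φ
  have hE : ∀ (X : Ω → ℝ), Measurable X → (∀ᵐ ω ∂μ, X ω ∈ Set.Icc (0:ℝ) 1) →
      Integrable (fun ω => φ (X ω)) μ →
      ∫ ω, φ (X ω) ∂μ = φ 0 + (∫⁻ x in Set.Ioc (0:ℝ) 1, μ {ω | x < X ω} ∂ν).toReal := by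
    intro X hX hsupp hint
    have hnn : 0 ≤ᵐ[μ] fun ω => φ (X ω) - φ 0 := by
      filter_upwards [hsupp] with ω hω
      have := hφmono hω.1
      simp only [Pi.zero_apply]
      linarith
    have hsub : ∫ ω, (φ (X ω) - φ 0) ∂μ = ∫ ω, φ (X ω) ∂μ - φ 0 := by
      rw [integral_sub hint (integrable_const _), integral_const, probReal_univ]
      simp
    have hmble : AEStronglyMeasurable (fun ω => φ (X ω) - φ 0) μ :=
      (((hφmeas.comp hX).sub measurable_const)).aestronglyMeasurable
    have h1 : ∫ ω, (φ (X ω) - φ 0) ∂μ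
        = (∫⁻ ω, ENNReal.ofReal (φ (X ω) - φ 0) ∂μ).toReal :=
      integral_eq_lintegral_of_nonneg_ae hnn hmble
    have h2 : ∫⁻ ω, ENNReal.ofReal (φ (X ω) - φ 0) ∂μ = ∫⁻ ω, ν (Set.Ioo 0 (X ω)) ∂μ := by
      refine lintegral_congr_ae ?_
      filter_upwards [hsupp] with ω hω
      rw [hν_def, Φ.measure_Ioo, hΦcoe, hleftLim]
    have h3 := lc_aux μ X hX hsupp ν
    have : ∫ ω, φ (X ω) ∂μ - φ 0 = (∫⁻ x in Set.Ioc (0:ℝ) 1, μ {ω | x < X ω} ∂ν).toReal := by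
      rw [← hsub, h1, h2, h3]
    linarith
  -- mean identity
  have hC : ∀ (X : Ω → ℝ), Measurable X → (∀ᵐ ω ∂μ, X ω ∈ Set.Icc (0:ℝ) 1) →
      ENNReal.ofReal (∫ ω, X ω ∂μ) = ∫⁻ x in Set.Ioc (0:ℝ) 1, μ {ω | x < X ω} ∂volume := by
    intro X hX hsupp
    have hXint : Integrable X μ := by
      refine Integrable.mono' (integrable_const 1) hX.aestronglyMeasurable ?_
      filter_upwards [hsupp] with ω hω
      rw [Real.norm_eq_abs, abs_le]
      exact ⟨by linarith [hω.1], hω.2⟩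
    have hXnn : 0 ≤ᵐ[μ] X := by
      filter_upwards [hsupp] with ω hω using hω.1
    rw [ofReal_integral_eq_lintegral_ofReal hXint hXnn, ← lc_aux μ X hX hsupp volume]
    refine lintegral_congr_ae ?_
    filter_upwards [hsupp] with ω hω
    rw [Real.volume_Ioo, sub_zero]
  -- pointwise comparison of survival functions
  have hcompl : ∀ (X : Ω → ℝ), Measurable X → ∀ x : ℝ,
      μ {ω | x < X ω} = 1 - μ {ω | X ω ≤ x} := by
    intro X hX x
    have hset : {ω | x < X ω} = {ω | X ω ≤ x}ᶜ := by
      ext ω; simp [not_le]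
    rw [hset, measure_compl (measurableSet_le hX measurable_const) (measure_ne_top μ _),
      measure_univ]
  have hmono_of_F : ∀ (x : ℝ), F₂ x ≤ F₁ x → f₁ x ≤ f₂ x := by
    intro x h
    have h' : μ {ω | X₂ ω ≤ x} ≤ μ {ω | X₁ ω ≤ x} := by
      rw [hF₁, hF₂] at h
      exact (ENNReal.toReal_le_toReal (measure_ne_top μ _) (measure_ne_top μ _)).1 h
    rw [hf₁_def, hf₂_def]
    simp only
    rw [hcompl X₁ hX₁ x, hcompl X₂ hX₂ x]
    exact tsub_le_tsub_left h' 1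
  have hmono_of_F' : ∀ (x : ℝ), F₁ x ≤ F₂ x → f₂ x ≤ f₁ x := by
    intro x h
    have h' : μ {ω | X₁ ω ≤ x} ≤ μ {ω | X₂ ω ≤ x} := by
      rw [hF₁, hF₂] at h
      exact (ENNReal.toReal_le_toReal (measure_ne_top μ _) (measure_ne_top μ _)).1 h
    rw [hf₁_def, hf₂_def]
    simp only
    rw [hcompl X₁ hX₁ x, hcompl X₂ hX₂ x]
    exact tsub_le_tsub_left h' 1
  have hone : ∀ (X : Ω → ℝ), Measurable X → (∀ᵐ ω ∂μ, X ω ∈ Set.Icc (0:ℝ) 1) →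
      μ {ω | X ω ≤ 1} = 1 := by
    intro X hX hsupp
    have h0 : μ {ω | X ω ≤ 1}ᶜ = 0 := by
      refine measure_mono_null (fun ω hω => ?_) (ae_iff.1 hsupp)
      exact fun h => hω h.2
    have h1 : μ {ω | X ω ≤ 1} + μ {ω | X ω ≤ 1}ᶜ = μ Set.univ :=
      measure_add_measure_compl (measurableSet_le hX measurable_const)
    rw [h0, add_zero, measure_univ] at h1
    exact h1
  have hL : ∀ x ∈ Set.Ioc (0:ℝ) xstar, f₁ x ≤ f₂ x := by
    intro x hxm
    refine hmono_of_F x ?_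
    rcases eq_or_lt_of_le hxm.2 with rfl | hlt
    · exact le_of_eq hcross.symm
    · exact (hbelow x ⟨hxm.1, hlt⟩).le
  have hR : ∀ x ∈ Set.Ioc xstar (1:ℝ), f₂ x ≤ f₁ x := by
    intro x hxm
    refine hmono_of_F' x ?_
    rcases eq_or_lt_of_le hxm.2 with rfl | hlt
    · rw [hF₁, hF₂, hone X₁ hX₁ hsupp₁, hone X₂ hX₂ hsupp₂]
    · exact (habove x ⟨hxm.1, hlt⟩).le
  -- the slope constant
  obtain ⟨K, hK0, k1, k2⟩ := exists_K hφmono hφconc xstar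
  -- splitting of the lintegrals
  have hsplit : ∀ (ρ : Measure ℝ) (f : ℝ → ℝ≥0∞),
      ∫⁻ x in Set.Ioc (0:ℝ) 1, f x ∂ρ
        = ∫⁻ x in Set.Ioc (0:ℝ) xstar, f x ∂ρ + ∫⁻ x in Set.Ioc xstar (1:ℝ), f x ∂ρ := by
    intro ρ f
    rw [← Set.Ioc_union_Ioc_eq_Ioc hx.1.le hx.2.le,
      lintegral_union measurableSet_Ioc (Set.Ioc_disjoint_Ioc_of_le le_rfl)]
  have hLsplit : ∀ (ρ : Measure ℝ),
      ∫⁻ x in Set.Ioc (0:ℝ) xstar, f₂ x ∂ρ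
        = ∫⁻ x in Set.Ioc (0:ℝ) xstar, f₁ x ∂ρ
          + ∫⁻ x in Set.Ioc (0:ℝ) xstar, (f₂ x - f₁ x) ∂ρ := by
    intro ρ
    rw [← lintegral_add_left hf₁meas]
    refine setLIntegral_congr_fun_ae measurableSet_Ioc
      (Filter.Eventually.of_forall fun x hxm => ?_)
    exact (add_tsub_cancel_of_le (hL x hxm)).symm
  have hRsplit : ∀ (ρ : Measure ℝ),
      ∫⁻ x in Set.Ioc xstar (1:ℝ), f₁ x ∂ρ
        = ∫⁻ x in Set.Ioc xstar (1:ℝ), f₂ x ∂ρ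
          + ∫⁻ x in Set.Ioc xstar (1:ℝ), (f₁ x - f₂ x) ∂ρ := by
    intro ρ
    rw [← lintegral_add_left hf₂meas]
    refine setLIntegral_congr_fun_ae measurableSet_Ioc
      (Filter.Eventually.of_forall fun x hxm => ?_)
    exact (add_tsub_cancel_of_le (hR x hxm)).symm
  -- bounds
  have hbound : ∀ (ρ : Measure ℝ) (S : Set ℝ) (f : ℝ → ℝ≥0∞), (∀ x, f x ≤ 1) →
      ∫⁻ x in S, f x ∂ρ ≤ ρ S := by
    intro ρ S f hf
    calc ∫⁻ x in S, f x ∂ρ ≤ ∫⁻ _ in S, 1 ∂ρ := lintegral_mono hf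
      _ = ρ S := setLIntegral_one S
  have hle1 : ∀ x, f₁ x ≤ 1 := fun x => prob_le_one
  have hle2 : ∀ x, f₂ x ≤ 1 := fun x => prob_le_one
  have hsub21 : ∀ x, f₂ x - f₁ x ≤ 1 := fun x => le_trans tsub_le_self (hle2 x)
  have hsub12 : ∀ x, f₁ x - f₂ x ≤ 1 := fun x => le_trans tsub_le_self (hle1 x)
  -- equal means implies equal "d" integrals w.r.t. volume
  have hCC : ∫⁻ x in Set.Ioc (0:ℝ) 1, f₁ x ∂volume = ∫⁻ x in Set.Ioc (0:ℝ) 1, f₂ x ∂volume := by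
    rw [← hC X₁ hX₁ hsupp₁, ← hC X₂ hX₂ hsupp₂, hmean]
  have hdvol : ∫⁻ x in Set.Ioc (0:ℝ) xstar, (f₂ x - f₁ x) ∂volume
      = ∫⁻ x in Set.Ioc xstar (1:ℝ), (f₁ x - f₂ x) ∂volume := by
    have h1 := hsplit volume f₁
    have h2 := hsplit volume f₂
    rw [h1, h2, hLsplit volume, hRsplit volume] at hCC
    set a := ∫⁻ x in Set.Ioc (0:ℝ) xstar, f₁ x ∂volume with ha_def
    set b := ∫⁻ x in Set.Ioc xstar (1:ℝ), f₂ x ∂volume with hb_def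
    set p := ∫⁻ x in Set.Ioc (0:ℝ) xstar, (f₂ x - f₁ x) ∂volume with hp_def
    set q := ∫⁻ x in Set.Ioc xstar (1:ℝ), (f₁ x - f₂ x) ∂volume with hq_def
    have hane : a ≠ ⊤ := by
      refine ne_of_lt (lt_of_le_of_lt (hbound volume _ _ hle1) ?_)
      exact measure_Ioc_lt_top
    have hbne : b ≠ ⊤ := by
      refine ne_of_lt (lt_of_le_of_lt (hbound volume _ _ hle2) ?_)
      exact measure_Ioc_lt_top
    have habne : a + b ≠ ⊤ := by
      simp [ENNReal.add_ne_top, hane, hbne]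
    have heq : (a + b) + q = (a + b) + p := by
      calc (a + b) + q = a + (b + q) := by ring
        _ = a + p + b := hCC
        _ = (a + b) + p := by ring
    exact ((ENNReal.add_right_inj habne).1 heq).symm
  -- measure comparison
  have hk1' : ∀ a b : ℝ, (0:ℝ) ≤ a → a ≤ b → b ≤ xstar → K * (b - a) ≤ Φ b - Φ a := by
    intro a b _ hab hbx
    rw [hΦcoe]
    exact k1 a b hab hbx
  have hk2' : ∀ a b : ℝ, xstar ≤ a → a ≤ b → b ≤ (1:ℝ) → Φ b - Φ a ≤ K * (b - a) := by
    intro a b hax hab _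
    rw [hΦcoe]
    exact k2 a b hax hab
  have hmL : (ENNReal.ofReal K • volume).restrict (Set.Ioc (0:ℝ) xstar)
      ≤ ν.restrict (Set.Ioc (0:ℝ) xstar) :=
    measure_restrict_ge Φ hK0 hx.1.le hk1'
  have hmR : ν.restrict (Set.Ioc xstar (1:ℝ))
      ≤ (ENNReal.ofReal K • volume).restrict (Set.Ioc xstar (1:ℝ)) :=
    measure_restrict_le Φ hK0 hx.2.le hk2'
  have hdL : ENNReal.ofReal K * ∫⁻ x in Set.Ioc (0:ℝ) xstar, (f₂ x - f₁ x) ∂volume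
      ≤ ∫⁻ x in Set.Ioc (0:ℝ) xstar, (f₂ x - f₁ x) ∂ν := by
    calc ENNReal.ofReal K * ∫⁻ x in Set.Ioc (0:ℝ) xstar, (f₂ x - f₁ x) ∂volume
        = ∫⁻ x, (f₂ x - f₁ x) ∂((ENNReal.ofReal K • volume).restrict (Set.Ioc (0:ℝ) xstar)) := by
          rw [Measure.restrict_smul, lintegral_smul_measure, smul_eq_mul]
      _ ≤ ∫⁻ x, (f₂ x - f₁ x) ∂(ν.restrict (Set.Ioc (0:ℝ) xstar)) :=
          lintegral_mono' hmL le_rfl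
  have hdR : ∫⁻ x in Set.Ioc xstar (1:ℝ), (f₁ x - f₂ x) ∂ν
      ≤ ENNReal.ofReal K * ∫⁻ x in Set.Ioc xstar (1:ℝ), (f₁ x - f₂ x) ∂volume := by
    calc ∫⁻ x, (f₁ x - f₂ x) ∂(ν.restrict (Set.Ioc xstar (1:ℝ)))
        ≤ ∫⁻ x, (f₁ x - f₂ x) ∂((ENNReal.ofReal K • volume).restrict (Set.Ioc xstar (1:ℝ))) :=
          lintegral_mono' hmR le_rfl
      _ = ENNReal.ofReal K * ∫⁻ x in Set.Ioc xstar (1:ℝ), (f₁ x - f₂ x) ∂volume := by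
          rw [Measure.restrict_smul, lintegral_smul_measure, smul_eq_mul]
  -- main ENNReal inequality
  set A₁ := ∫⁻ x in Set.Ioc (0:ℝ) 1, f₁ x ∂ν with hA₁_def
  set A₂ := ∫⁻ x in Set.Ioc (0:ℝ) 1, f₂ x ∂ν with hA₂_def
  have hA₂ne : A₂ ≠ ⊤ := by
    refine ne_of_lt (lt_of_le_of_lt (hbound ν _ _ hle2) ?_)
    exact measure_Ioc_lt_top
  have hmain : A₁ ≤ A₂ := by
    rw [hA₁_def, hA₂_def, hsplit ν f₁, hsplit ν f₂, hLsplit ν, hRsplit ν]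
    calc ∫⁻ x in Set.Ioc (0:ℝ) xstar, f₁ x ∂ν
          + (∫⁻ x in Set.Ioc xstar (1:ℝ), f₂ x ∂ν
            + ∫⁻ x in Set.Ioc xstar (1:ℝ), (f₁ x - f₂ x) ∂ν)
        ≤ ∫⁻ x in Set.Ioc (0:ℝ) xstar, f₁ x ∂ν
          + (∫⁻ x in Set.Ioc xstar (1:ℝ), f₂ x ∂ν
            + ENNReal.ofReal K * ∫⁻ x in Set.Ioc xstar (1:ℝ), (f₁ x - f₂ x) ∂volume) := by
          gcongr
      _ = ∫⁻ x in Set.Ioc (0:ℝ) xstar, f₁ x ∂ν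
          + (∫⁻ x in Set.Ioc xstar (1:ℝ), f₂ x ∂ν
            + ENNReal.ofReal K * ∫⁻ x in Set.Ioc (0:ℝ) xstar, (f₂ x - f₁ x) ∂volume) := by
          rw [hdvol]
      _ ≤ ∫⁻ x in Set.Ioc (0:ℝ) xstar, f₁ x ∂ν
          + (∫⁻ x in Set.Ioc xstar (1:ℝ), f₂ x ∂ν
            + ∫⁻ x in Set.Ioc (0:ℝ) xstar, (f₂ x - f₁ x) ∂ν) := by
          gcongr
      _ = ∫⁻ x in Set.Ioc (0:ℝ) xstar, f₁ x ∂ν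
          + ∫⁻ x in Set.Ioc (0:ℝ) xstar, (f₂ x - f₁ x) ∂ν
          + ∫⁻ x in Set.Ioc xstar (1:ℝ), f₂ x ∂ν := by
          ring
  -- conclusion
  have hE₁ := hE X₁ hX₁ hsupp₁ hint₁
  have hE₂ := hE X₂ hX₂ hsupp₂ hint₂
  rw [ge_iff_le, hE₁, hE₂]
  have : A₁.toReal ≤ A₂.toReal := ENNReal.toReal_mono hA₂ne hmain
  linarith
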